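/- Let V be a valuation ring and V → S a finite ring map inducing a surjection on prime spectra. Then V → S admits a V-linear left inverse; in particular, valuation rings are splinters. -/

import Mathlib

universe u

/-- In a valuation ring, among finitely many elements (not all zero) there is a nonzero
one dividing all of them. -/
lemma valRing_exists_dvd_all {V : Type u} [CommRing V] [IsDomain V] [ValuationRing V]
    {ι : Type*} [Fintype ι] (c : ι → V) (hc : ∃ i, c i ≠ 0) :
    ∃ j, c j ≠ 0 ∧ ∀ i, c j ∣ c i := by
  classical
  have key : ∀ s : Finset ι, s.Nonempty → ∃ j ∈ s, ∀ i ∈ s, c j ∣ c i := by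
    intro s
    induction s using Finset.cons_induction with
    | empty => intro h; simp at h
    | cons a s ha ih =>
      intro _
      rcases s.eq_empty_or_nonempty with rfl | hs
      · exact ⟨a, by simp⟩
      · obtain ⟨j, hj, hdvd⟩ := ih hs
        rcases ValuationRing.dvd_total (c a) (c j) with h | h
        · refine ⟨a, Finset.mem_cons_self a s, ?_⟩
          intro i hi
          rcases Finset.mem_cons.mp hi with rfl | hi
          · rfl
          · exact h.trans (hdvd i hi)
        · refine ⟨j, Finset.mem_cons.mpr (Or.inr hj), ?_⟩
          intro i hi
          rcases Finset.mem_cons.mp hi with rfl | hi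
          · exact h
          · exact hdvd i hi
  obtain ⟨i0, hi0⟩ := hc
  have hne : (Finset.univ.filter fun i => c i ≠ 0).Nonempty :=
    ⟨i0, by simpa using hi0⟩
  obtain ⟨j, hj, hdvd⟩ := key _ hne
  rw [Finset.mem_filter] at hj
  refine ⟨j, hj.2, fun i => ?_⟩
  by_cases h : c i = 0
  · simp [h]
  · exact hdvd i (Finset.mem_filter.mpr ⟨Finset.mem_univ _, h⟩)

/-- A torsion-free module spanned by `n` elements over a valuation ring has a finite basis. -/
lemma valRing_basis_of_span {V M : Type u} [CommRing V] [IsDomain V] [ValuationRing V]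
    [AddCommGroup M] [Module V M] [NoZeroSMulDivisors V M] :
    ∀ (n : ℕ) (f : Fin n → M), Submodule.span V (Set.range f) = ⊤ →
      ∃ (k : ℕ) (_ : Module.Basis (Fin k) V M), True := by
  classical
  intro n
  induction n using Nat.strong_induction_on with
  | _ n ih =>
    intro f hf
    by_cases hli : LinearIndependent V f
    · exact ⟨n, Module.Basis.mk hli (by rw [hf]), trivial⟩
    rw [Fintype.linearIndependent_iff] at hli
    push_neg at hli
    obtain ⟨c, hc, hcon⟩ := hli
    obtain ⟨j, hj0, hjdvd⟩ := valRing_exists_dvd_all c hcon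
    obtain ⟨m, rfl⟩ : ∃ m, n = m + 1 := by
      rcases n with - | m
      · exact absurd j.2 (by omega)
      · exact ⟨_, rfl⟩
    have hb : ∀ i, ∃ b : V, c i = c j * b := fun i => (hjdvd i).imp fun b h => h
    set b : Fin (m + 1) → V := fun i => if i = j then 1 else (hb i).choose with hbdef
    have hcb : ∀ i, c i = c j * b i := by
      intro i
      by_cases h : i = j
      · subst h; simp [hbdef]
      · simpa [hbdef, h] using (hb i).choose_spec
    have hsum : (∑ i, b i • f i) = 0 := by
      have h0 : c j • (∑ i, b i • f i) = 0 := by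
        rw [Finset.smul_sum, ← hc]
        refine Finset.sum_congr rfl fun i _ => ?_
        rw [smul_smul, ← hcb i]
      rcases smul_eq_zero.mp h0 with h | h
      · exact absurd h hj0
      · exact h
    have hfj : f j = -∑ k : Fin m, b (j.succAbove k) • f (j.succAbove k) := by
      have hs := Fin.sum_univ_succAbove (fun i => b i • f i) j
      rw [hsum] at hs
      have hbj : b j = 1 := by simp [hbdef]
      rw [hbj, one_smul] at hs
      rw [eq_neg_iff_add_eq_zero, ← hs]
    have hspan : Submodule.span V (Set.range fun k : Fin m => f (j.succAbove k)) = ⊤ := by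
      rw [eq_top_iff, ← hf, Submodule.span_le]
      rintro x ⟨i, rfl⟩
      by_cases h : i = j
      · subst h
        rw [hfj]
        exact neg_mem (Submodule.sum_mem _ fun k _ =>
          Submodule.smul_mem _ _ (Submodule.subset_span ⟨k, rfl⟩))
      · obtain ⟨k, hk⟩ := Fin.exists_succAbove_eq h
        exact Submodule.subset_span ⟨k, congrArg f hk⟩
    exact ih m (by omega) _ hspan

/-- Any finite ring map from a valuation ring inducing a surjection on prime spectra
admits a `V`-linear left inverse; in particular, valuation rings are splinters. -/
theorem valuationRing_splinter
    (V S : Type u) [CommRing V] [IsDomain V] [ValuationRing V]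
    [CommRing S] [Algebra V S] [Module.Finite V S]
    (hsurj : Function.Surjective (PrimeSpectrum.comap (algebraMap V S))) :
    ∃ g : S →ₗ[V] V, g.comp (Algebra.linearMap V S) = LinearMap.id := by
  classical
  obtain ⟨p, hp⟩ := hsurj ⟨⊥, Ideal.bot_prime⟩
  have hpcomap : Ideal.comap (algebraMap V S) p.asIdeal = ⊥ :=
    congrArg PrimeSpectrum.asIdeal hp
  set I := p.asIdeal
  haveI : I.IsPrime := p.isPrime
  set S' := S ⧸ I
  haveI : IsDomain S' := Ideal.Quotient.isDomain I
  have halg : ∀ v : V, algebraMap V S' v = Ideal.Quotient.mk I (algebraMap V S v) := by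
    intro v; rfl
  have hinj : Function.Injective (algebraMap V S') := by
    intro a b hab
    rw [halg, halg] at hab
    have h1 : algebraMap V S a - algebraMap V S b ∈ I := Ideal.Quotient.eq.mp hab
    have h2 : a - b ∈ Ideal.comap (algebraMap V S) I :=
      Ideal.mem_comap.mpr (by simpa [map_sub] using h1)
    rw [hpcomap] at h2
    exact sub_eq_zero.mp (Ideal.mem_bot.mp h2)
  haveI : Module.Finite V S' :=
    Module.Finite.of_surjective (Ideal.Quotient.mkₐ V I).toLinearMap
      Ideal.Quotient.mk_surjective
  haveI : NoZeroSMulDivisors V S' := by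
    refine ⟨fun {a s} h => ?_⟩
    rw [Algebra.smul_def] at h
    rcases mul_eq_zero.mp h with h | h
    · exact Or.inl (hinj (by rw [h, map_zero]))
    · exact Or.inr h
  obtain ⟨nn, ff, hff⟩ := Module.Finite.exists_fin (R := V) (M := S')
  obtain ⟨n, b, -⟩ := valRing_basis_of_span nn ff hff
  -- 1 is not in m • S'
  have h1top : (1 : S') ∉ (IsLocalRing.maximalIdeal V) • (⊤ : Submodule V S') := by
    intro h1
    have htople : (⊤ : Submodule V S') ≤ (IsLocalRing.maximalIdeal V) • ⊤ := by
      intro s _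
      have hmem : s * 1 ∈ (IsLocalRing.maximalIdeal V) • (⊤ : Submodule V S') := by
        refine Submodule.smul_induction_on h1 ?_ ?_
        · intro a ha t _
          rw [Algebra.smul_def, ← mul_assoc, mul_comm s, mul_assoc, ← Algebra.smul_def]
          exact Submodule.smul_mem_smul ha trivial
        · intro x y hx hy
          rw [mul_add]; exact add_mem hx hy
      simpa using hmem
    have hbot := Submodule.eq_bot_of_le_smul_of_le_jacobson_bot
      (IsLocalRing.maximalIdeal V) ⊤ (Module.finite_def.mp inferInstance) htople
      (le_of_eq (IsLocalRing.jacobson_eq_maximalIdeal ⊥ bot_ne_top).symm)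
    have h1' : (1 : S') ∈ (⊤ : Submodule V S') := trivial
    rw [hbot] at h1'
    exact one_ne_zero ((Submodule.mem_bot V).mp h1')
  have hex : ∃ i, IsUnit (b.repr 1 i) := by
    by_contra hno
    push_neg at hno
    apply h1top
    have h1 : (1 : S') = ∑ i, b.repr 1 i • b i := (b.sum_repr 1).symm
    rw [h1]
    refine Submodule.sum_mem _ fun i _ => Submodule.smul_mem_smul ?_ trivial
    exact (IsLocalRing.mem_maximalIdeal _).mpr (hno i)
  obtain ⟨i, u, hu⟩ := hex
  refine ⟨((u⁻¹ : Vˣ) : V) • ((b.coord i).comp (Ideal.Quotient.mkₐ V I).toLinearMap), ?_⟩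
  refine LinearMap.ext fun v => ?_
  simp only [LinearMap.comp_apply, LinearMap.smul_apply, Algebra.linearMap_apply,
    LinearMap.id_apply, AlgHom.toLinearMap_apply, Ideal.Quotient.mkₐ_eq_mk]
  have hm : Ideal.Quotient.mk I (algebraMap V S v) = algebraMap V S' v := rfl
  rw [hm, Algebra.algebraMap_eq_smul_one, map_smul, Module.Basis.coord_apply, ← hu,
    smul_eq_mul, smul_eq_mul, mul_comm v, ← mul_assoc, Units.inv_mul, one_mul]
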